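/- Let (G,+) be an abelian group and let A, B ⊆ G be finite sets with |A + A| ≤ C₁|A| and |B + B| ≤ C₂|B|. Suppose there exists a set G₀ ⊆ A × B with |G₀| ≥ |A||B|/C₃ such that the image of G₀ under the map π₁(x,y) = x + y has cardinality at most C₄|A|. Then |A + B| ≤ C₁C₂C₃C₄|A|. -/

import Mathlib

open Finset Pointwise

theorem sumset_growth_of_popular_graph
    {G : Type*} [AddCommGroup G] [DecidableEq G]
    (A B : Finset G) (hA : A.Nonempty) (hB : B.Nonempty)
    (C₁ C₂ C₃ C₄ : ℝ) (hC₁ : 0 < C₁) (hC₂ : 0 < C₂) (hC₃ : 0 < C₃) (hC₄ : 0 < C₄)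
    (h₁ : ((A + A).card : ℝ) ≤ C₁ * A.card)
    (h₂ : ((B + B).card : ℝ) ≤ C₂ * B.card)
    (G₀ : Finset (G × G)) (hG₀ : G₀ ⊆ A ×ˢ B)
    (hG₀card : ((A.card : ℝ) * B.card) / C₃ ≤ G₀.card)
    (hπ : ((G₀.image (fun q => q.1 + q.2)).card : ℝ) ≤ C₄ * A.card) :
    ((A + B).card : ℝ) ≤ C₁ * C₂ * C₃ * C₄ * A.card := by
  classical
  set S := G₀.image (fun q => q.1 + q.2) with hS
  have hApos : (0:ℝ) < A.card := by exact_mod_cast Finset.card_pos.mpr hA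
  have hBpos : (0:ℝ) < B.card := by exact_mod_cast Finset.card_pos.mpr hB
  have hG₀pos : (0:ℝ) < G₀.card := lt_of_lt_of_le (by positivity) hG₀card
  have hG₀ne : G₀.Nonempty := Finset.card_pos.mp (by exact_mod_cast hG₀pos)
  have hSne : S.Nonempty := hG₀ne.image _
  -- pick most popular sum
  obtain ⟨s, hsS, hsmax⟩ := S.exists_max_image
    (fun t => (G₀.filter fun q => q.1 + q.2 = t).card) hSne
  set P := G₀.filter (fun q => q.1 + q.2 = s) with hP
  have hsum : G₀.card = ∑ t ∈ S, (G₀.filter fun q => q.1 + q.2 = t).card :=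
    Finset.card_eq_sum_card_fiberwise (fun x hx => Finset.mem_image_of_mem _ hx)
  have hpig : G₀.card ≤ S.card * P.card := by
    rw [hsum]
    calc ∑ t ∈ S, (G₀.filter fun q => q.1 + q.2 = t).card
        ≤ ∑ _t ∈ S, P.card := Finset.sum_le_sum (fun t ht => hsmax t ht)
      _ = S.card * P.card := by rw [Finset.sum_const, smul_eq_mul]
  have hPpos : (0:ℝ) < P.card := by
    by_contra h
    push_neg at h
    have : P.card = 0 := by exact_mod_cast le_antisymm h (by positivity)
    have : (G₀.card : ℝ) ≤ 0 := by
      have := hpig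
      rw [‹P.card = 0›, Nat.mul_zero] at this
      exact_mod_cast this
    linarith
  -- representatives
  have hrep : ∀ c ∈ A + B, ∃ p : G × G, p.1 ∈ A ∧ p.2 ∈ B ∧ p.1 + p.2 = c := by
    intro c hc
    rw [Finset.mem_add] at hc
    obtain ⟨y, hy, z, hz, hyz⟩ := hc
    exact ⟨(y, z), hy, hz, hyz⟩
  choose! f hf1 hf2 hf3 using hrep
  -- injection
  have hinj : ((A + B) ×ˢ P).card ≤ ((A + A) ×ˢ (B + B)).card := by
    apply Finset.card_le_card_of_injOn
      (fun q => ((f q.1).1 + q.2.1, (f q.1).2 + q.2.2))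
    · rintro ⟨c, a, b⟩ hq
      rw [Finset.mem_coe, Finset.mem_product] at hq
      obtain ⟨hc, hab⟩ := hq
      have habG : (a, b) ∈ G₀ := (Finset.mem_filter.mp hab).1
      have habAB := hG₀ habG
      rw [Finset.mem_product] at habAB
      rw [Finset.mem_coe, Finset.mem_product]
      exact ⟨Finset.add_mem_add (hf1 c hc) habAB.1,
             Finset.add_mem_add (hf2 c hc) habAB.2⟩
    · rintro ⟨c, a, b⟩ hq ⟨c', a', b'⟩ hq' heq
      rw [Finset.mem_coe, Finset.mem_product] at hq hq'
      obtain ⟨hc, hab⟩ := hq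
      obtain ⟨hc', hab'⟩ := hq'
      have hs1 : a + b = s := (Finset.mem_filter.mp hab).2
      have hs2 : a' + b' = s := (Finset.mem_filter.mp hab').2
      simp only [Prod.mk.injEq] at heq
      obtain ⟨e1, e2⟩ := heq
      have hcc : c = c' := by
        have h3 := hf3 c hc
        have h3' := hf3 c' hc'
        have key : c + s = c' + s := by
          calc c + s = ((f c).1 + (f c).2) + (a + b) := by rw [h3, hs1]
            _ = ((f c).1 + a) + ((f c).2 + b) := by abel
            _ = ((f c').1 + a') + ((f c').2 + b') := by rw [e1, e2]
            _ = ((f c').1 + (f c').2) + (a' + b') := by abel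
            _ = c' + s := by rw [h3', hs2]
        exact add_right_cancel key
      subst hcc
      have ha : a = a' := add_left_cancel e1
      have hb : b = b' := add_left_cancel e2
      subst ha; subst hb; rfl
  -- numbers
  rw [Finset.card_product, Finset.card_product] at hinj
  have hinjR : ((A + B).card : ℝ) * P.card ≤ ((A + A).card : ℝ) * (B + B).card := by
    exact_mod_cast hinj
  have hpigR : (G₀.card : ℝ) ≤ (S.card : ℝ) * P.card := by exact_mod_cast hpig
  have h4 : ((A.card : ℝ) * B.card) ≤ C₃ * ((C₄ * A.card) * P.card) := by
    have h5 : ((A.card : ℝ) * B.card) ≤ C₃ * G₀.card := by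
      rw [div_le_iff₀ hC₃] at hG₀card; linarith
    calc ((A.card : ℝ) * B.card) ≤ C₃ * G₀.card := h5
      _ ≤ C₃ * ((S.card : ℝ) * P.card) := by
          exact mul_le_mul_of_nonneg_left hpigR (le_of_lt hC₃)
      _ ≤ C₃ * ((C₄ * A.card) * P.card) := by
          apply mul_le_mul_of_nonneg_left _ (le_of_lt hC₃)
          exact mul_le_mul_of_nonneg_right hπ (le_of_lt hPpos)
  have key : ((A + B).card : ℝ) * P.card ≤ (C₁ * C₂ * C₃ * C₄ * A.card) * P.card := by
    calc ((A + B).card : ℝ) * P.card ≤ ((A + A).card : ℝ) * (B + B).card := hinjR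
      _ ≤ (C₁ * A.card) * (C₂ * B.card) := by
          apply mul_le_mul h₁ h₂ (by positivity) (by positivity)
      _ = C₁ * C₂ * ((A.card : ℝ) * B.card) := by ring
      _ ≤ C₁ * C₂ * (C₃ * ((C₄ * A.card) * P.card)) := by
          apply mul_le_mul_of_nonneg_left h4 (by positivity)
      _ = (C₁ * C₂ * C₃ * C₄ * A.card) * P.card := by ring
  exact le_of_mul_le_mul_right key hPpos
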